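/- The factorization identity holds: (D³ + W D + Υ)(D³ − D∘W + Υ) = ∂_x³ + U ∂_x + Φ D + (1/2)(U_x − (DΦ)), where U = −2W_x − W² + (DΥ) and Φ = −Υ_x − 2ΥW. -/
import Mathlib


/-- The factorization identity
`(D³ + W D + Υ)(D³ − D∘W + Υ) = ∂_x³ + U ∂_x + Φ D + ½(U_x − (DΦ))`
with the Miura-type transformation `U = −2W_x − W² + (DΥ)`, `Φ = −Υ_x − 2ΥW`.

We work in an associative ℝ-algebra `A` of super differential operators:
`d` is the superderivative `D` (so `∂_x = d²`, `∂_x³ = d⁶`), and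
`w0 = W, w1 = DW, w2 = W_x, w3 = DW_x, w4 = W_xx` (W even),
`y0 = Υ, y1 = DΥ, y2 = Υ_x, y3 = DΥ_x` (Υ odd) are multiplication operators,
subject to the graded commutation rules `d f = (Df) + (−1)^{|f|} f d` and to
supercommutativity of the coefficient fields.  Here
`U_x = −2W_xx − 2W W_x + (DΥ_x)` and
`DΦ = −(DΥ_x) − 2(DΥ)W + 2Υ(DW)`. -/
theorem ssk_factorization
    {A : Type*} [Ring A] [Algebra ℝ A]
    (d w0 w1 w2 w3 w4 y0 y1 y2 y3 : A)
    (hw0 : d * w0 = w1 + w0 * d) (hw1 : d * w1 = w2 - w1 * d)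
    (hw2 : d * w2 = w3 + w2 * d) (hw3 : d * w3 = w4 - w3 * d)
    (hy0 : d * y0 = y1 - y0 * d) (hy1 : d * y1 = y2 + y1 * d)
    (hy2 : d * y2 = y3 - y2 * d)
    (heven : ∀ a ∈ ({w0, w2, w4, y1, y3} : Set A),
      ∀ b ∈ ({w0, w1, w2, w3, w4, y0, y1, y2, y3} : Set A), a * b = b * a)
    (hodd : ∀ a ∈ ({w1, w3, y0, y2} : Set A),
      ∀ b ∈ ({w1, w3, y0, y2} : Set A), a * b = -(b * a)) :
    (d ^ 3 + w0 * d + y0) * (d ^ 3 - d * w0 + y0)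
      = d ^ 6 + (-((2:ℝ) • w2) - w0 * w0 + y1) * d ^ 2
        + (-y2 - (2:ℝ) • (y0 * w0)) * d
        + (2 : ℝ)⁻¹ •
            ((-((2:ℝ) • w4) - (2:ℝ) • (w0 * w2) + y3)
              - (-y3 - (2:ℝ) • (y1 * w0) + (2:ℝ) • (y0 * w1))) := by
  -- commutation facts
  have c1 : w0 * y0 = y0 * w0 := heven w0 (by simp) y0 (by simp)
  have c2 : w0 * y1 = y1 * w0 := (heven y1 (by simp) w0 (by simp)).symm
  have c3 : y0 * y0 = -(y0 * y0) := hodd y0 (by simp) y0 (by simp)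
  have hy0sq : y0 * y0 = 0 := by
    have h2 : (2:ℝ) • (y0 * y0) = 0 := by
      rw [two_smul]; nth_rewrite 1 [c3]; abel
    calc y0 * y0 = (2:ℝ)⁻¹ • ((2:ℝ) • (y0 * y0)) := by rw [smul_smul]; norm_num
    _ = 0 := by rw [h2, smul_zero]
  -- pointwise push lemmas
  have Pw0 : ∀ x : A, d * (w0 * x) = w1 * x + w0 * (d * x) := fun x => by
    rw [← mul_assoc, hw0, add_mul, mul_assoc]
  have Pw1 : ∀ x : A, d * (w1 * x) = w2 * x - w1 * (d * x) := fun x => by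
    rw [← mul_assoc, hw1, sub_mul, mul_assoc]
  have Pw2 : ∀ x : A, d * (w2 * x) = w3 * x + w2 * (d * x) := fun x => by
    rw [← mul_assoc, hw2, add_mul, mul_assoc]
  have Py0 : ∀ x : A, d * (y0 * x) = y1 * x - y0 * (d * x) := fun x => by
    rw [← mul_assoc, hy0, sub_mul, mul_assoc]
  have Py1 : ∀ x : A, d * (y1 * x) = y2 * x + y1 * (d * x) := fun x => by
    rw [← mul_assoc, hy1, add_mul, mul_assoc]
  -- d^3 actions
  have h3w0 : d ^ 3 * w0 = w3 + w2 * d + w1 * d ^ 2 + w0 * d ^ 3 := by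
    rw [show d ^ 3 * w0 = d * (d * (d * w0)) by noncomm_ring]
    simp only [hw0, hw1, hw2, Pw0, Pw1, Pw2, mul_add, mul_sub]
    noncomm_ring
  have h3w1 : d ^ 3 * w1 = w4 - w3 * d + w2 * d ^ 2 - w1 * d ^ 3 := by
    rw [show d ^ 3 * w1 = d * (d * (d * w1)) by noncomm_ring]
    simp only [hw1, hw2, hw3, Pw1, Pw2, mul_add, mul_sub]
    noncomm_ring
  have h3y0 : d ^ 3 * y0 = y3 - y2 * d + y1 * d ^ 2 - y0 * d ^ 3 := by
    rw [show d ^ 3 * y0 = d * (d * (d * y0)) by noncomm_ring]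
    simp only [hy0, hy1, hy2, Py0, Py1, mul_add, mul_sub]
    noncomm_ring
  -- rewrite the half-term
  have hhalf : (2 : ℝ)⁻¹ •
      ((-((2:ℝ) • w4) - (2:ℝ) • (w0 * w2) + y3)
        - (-y3 - (2:ℝ) • (y1 * w0) + (2:ℝ) • (y0 * w1)))
      = -w4 - w0 * w2 + y3 + y1 * w0 - y0 * w1 := by
    have h : ((-((2:ℝ) • w4) - (2:ℝ) • (w0 * w2) + y3)
        - (-y3 - (2:ℝ) • (y1 * w0) + (2:ℝ) • (y0 * w1)))
        = (2:ℝ) • (-w4 - w0 * w2 + y3 + y1 * w0 - y0 * w1) := by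
      module
    rw [h, smul_smul]; norm_num
  rw [hhalf]
  have htwosmul : ∀ x : A, (2:ℝ) • x = x + x := fun x => two_smul ℝ x
  rw [htwosmul, htwosmul]
  -- expand the LHS
  rw [hw0]
  have expand : (d ^ 3 + w0 * d + y0) * (d ^ 3 - (w1 + w0 * d) + y0)
      = d ^ 6 - d ^ 3 * w1 - (d ^ 3 * w0) * d + d ^ 3 * y0
        + w0 * (d * d ^ 3) - w0 * (d * w1) - w0 * ((d * w0) * d) + w0 * (d * y0)
        + y0 * d ^ 3 - y0 * w1 - (y0 * w0) * d + y0 * y0 := by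
    noncomm_ring
  rw [expand, h3w1, h3w0, h3y0, hy0sq, hw1, hw0, hy0]
  have e1 : w0 * (y1 - y0 * d) = y1 * w0 - (y0 * w0) * d := by
    rw [mul_sub, c2, ← mul_assoc, c1]
  rw [e1]
  noncomm_ring
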